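/- arXiv:2106.07197 — 6 statements merged into one kernel-verified Lean document; each statement's English description precedes it below -/
import Mathlib

section
/- (Lemma 3.4, first part) Let Y : Fin d → Fin d → ℝ be curl-free. Then ReLU(Y) is the weighted adjacency matrix of a DAG: the edge relation E defined by E i j ↔ Y i j > 0 is acyclic, i.e. there is no vertex i with Relation.TransGen E i i. -/
/-- Lemma 3.4 (first part): if `Y` is curl-free then the directed graph of
`ReLU(Y)`, with an edge `i → j` iff `Y i j > 0`, is acyclic. -/
theorem relu_curlFree_is_dag (d : ℕ) (hd : 1 ≤ d)
    (Y : Fin d → Fin d → ℝ)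
    (hY : ∀ i j k : Fin d, Y i j + Y j k + Y k i = 0) :
    ¬ ∃ i : Fin d, Relation.TransGen (fun i j : Fin d => Y i j > 0) i i := by
  rintro ⟨i, h⟩
  have i0 : Fin d := ⟨0, hd⟩
  set f : Fin d → ℝ := fun j => Y i0 j with hf
  have hdiag : ∀ a : Fin d, Y a a = 0 := by
    intro a
    have := hY a a a
    linarith
  have hedge : ∀ a b : Fin d, Y a b > 0 → f a < f b := by
    intro a b hab
    have h1 := hY i0 a b
    have h2 := hY i0 b i0
    have h3 := hdiag i0
    simp only [hf]
    linarith
  have key : ∀ a b : Fin d, Relation.TransGen (fun i j : Fin d => Y i j > 0) a b → f a < f b := by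
    intro a b hab
    induction hab with
    | single h => exact hedge _ _ h
    | tail _ h ih => exact lt_trans ih (hedge _ _ h)
  exact lt_irrefl _ (key i i h)
end

section
/- (Lemma 3.4, second part) Let Y : Fin d → Fin d → ℝ be curl-free and let W : Fin d → Fin d → ℝ be any skew-symmetric matrix. Then the Hadamard product W ∘ ReLU(Y) is the weighted adjacency matrix of a DAG: the edge relation E defined by E i j ↔ W i j * max (Y i j) 0 ≠ 0 is acyclic, i.e. there is no vertex i with Relation.TransGen E i i. -/
/-- Lemma 3.4 (second part): if `Y` is curl-free and `W` is skew-symmetric,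
the directed graph of the Hadamard product `W ∘ ReLU(Y)` is acyclic. -/
theorem hadamard_relu_curlFree_is_dag (d : ℕ) (hd : 1 ≤ d)
    (Y W : Fin d → Fin d → ℝ)
    (hY : ∀ i j k : Fin d, Y i j + Y j k + Y k i = 0)
    (hW : ∀ i j : Fin d, W i j = -W j i) :
    ¬ ∃ i : Fin d,
      Relation.TransGen (fun i j : Fin d => W i j * max (Y i j) 0 ≠ 0) i i := by
  rintro ⟨i, h⟩
  set z : Fin d := ⟨0, hd⟩ with hz
  have hdiag : ∀ a : Fin d, Y a a = 0 := by
    intro a; have := hY a a a; linarith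
  have hstep : ∀ a b : Fin d, (W a b * max (Y a b) 0 ≠ 0) → Y a z > Y b z := by
    intro a b hab
    have hmax : max (Y a b) 0 ≠ 0 := fun h0 => hab (by rw [h0, mul_zero])
    have hpos : 0 < Y a b := by
      rcases lt_or_ge 0 (Y a b) with h' | h'
      · exact h'
      · exact absurd (max_eq_right h') hmax
    have h1 := hY a b z
    have h2 := hY b z b
    have h3 := hY a z a
    have hd1 := hdiag a
    have hd2 := hdiag b
    linarith
  have : ∀ a b : Fin d,
      Relation.TransGen (fun i j : Fin d => W i j * max (Y i j) 0 ≠ 0) a b →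
      Y a z > Y b z := by
    intro a b hab
    induction hab with
    | single h => exact hstep _ _ h
    | tail _ h ih => exact lt_trans (hstep _ _ h) ih
  exact lt_irrefl _ (this i i h)
end

section
/- (Theorem 3.5) For every potential p : Fin d → ℝ and every skew-symmetric matrix W : Fin d → Fin d → ℝ, the matrix A defined by A i j = W i j * max (p j - p i) 0 (that is, A = W ∘ ReLU(grad p)) is the weighted adjacency matrix of a DAG: the edge relation E_A defined by E_A i j ↔ A i j ≠ 0 is acyclic, i.e. there is no vertex i with Relation.TransGen E_A i i. -/
/-- Theorem 3.5: for every potential `p` and skew-symmetric `W`, the matrix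
`A i j = W i j * max (p j - p i) 0` (i.e. `W ∘ ReLU(grad p)`) is the weighted
adjacency matrix of a DAG. -/
theorem hadamard_relu_grad_is_dag (d : ℕ) (hd : 1 ≤ d)
    (p : Fin d → ℝ) (W : Fin d → Fin d → ℝ)
    (hW : ∀ i j : Fin d, W i j = -W j i) :
    ¬ ∃ i : Fin d,
      Relation.TransGen (fun i j : Fin d => W i j * max (p j - p i) 0 ≠ 0) i i := by
  rintro ⟨i, h⟩
  have key : ∀ a b : Fin d, W a b * max (p b - p a) 0 ≠ 0 → p a < p b := by
    intro a b hab
    by_contra hle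
    push_neg at hle
    have : max (p b - p a) 0 = 0 := max_eq_right (by linarith)
    simp [this] at hab
  have h' : Relation.TransGen (fun a b : Fin d => p a < p b) i i :=
    Relation.TransGen.mono key _ _ h
  have htr : Transitive (fun a b : Fin d => p a < p b) := fun _ _ _ => lt_trans
  rw [@Relation.transGen_eq_self _ _ ⟨htr⟩] at h'
  exact lt_irrefl _ h'
end

section
/- (Theorem 3.7) Let A : Fin d → Fin d → ℝ be the weighted adjacency matrix of a DAG, i.e. the edge relation E_A i j ↔ A i j ≠ 0 has no vertex i with Relation.TransGen E_A i i. Then there exist a skew-symmetric matrix W : Fin d → Fin d → ℝ and a potential p : Fin d → ℝ such that A i j = W i j * max (p j - p i) 0 for all i, j, and moreover p respects the topological order of the DAG: whenever there is a directed path from i to j (i.e. Relation.TransGen E_A i j), one has p i < p j. -/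
/-- Theorem 3.7: every weighted adjacency matrix of a DAG can be written as
`W ∘ ReLU(grad p)` with `W` skew-symmetric and `p` respecting the topological
order of the DAG. -/
theorem dag_eq_hadamard_relu_grad (d : ℕ) (hd : 1 ≤ d)
    (A : Fin d → Fin d → ℝ)
    (hA : ¬ ∃ i : Fin d, Relation.TransGen (fun a b : Fin d => A a b ≠ 0) i i) :
    ∃ (W : Fin d → Fin d → ℝ) (p : Fin d → ℝ),
      (∀ i j : Fin d, W i j = -W j i) ∧
      (∀ i j : Fin d, A i j = W i j * max (p j - p i) 0) ∧
      (∀ i j : Fin d, Relation.TransGen (fun a b : Fin d => A a b ≠ 0) i j → p i < p j) := by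
  set r : Fin d → Fin d → Prop := Relation.TransGen (fun a b : Fin d => A a b ≠ 0) with hr
  have hirr : ∀ i, ¬ r i i := fun i h => hA ⟨i, h⟩
  classical
  set p : Fin d → ℝ := fun i => ((Finset.univ.filter (fun k => r k i)).card : ℝ) with hp
  have hmono : ∀ i j, r i j → p i < p j := by
    intro i j hij
    have hsub : Finset.univ.filter (fun k => r k i) ⊂ Finset.univ.filter (fun k => r k j) := by
      constructor
      · intro k hk
        simp only [Finset.mem_filter, Finset.mem_univ, true_and] at hk ⊢
        exact hk.trans hij
      · intro hsub'
        have : i ∈ Finset.univ.filter (fun k => r k i) := by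
          apply hsub'
          simp only [Finset.mem_filter, Finset.mem_univ, true_and]
          exact hij
        simp only [Finset.mem_filter] at this
        exact hirr i this.2
    have := Finset.card_lt_card hsub
    simp only [hp]
    exact_mod_cast this
  set W : Fin d → Fin d → ℝ := fun i j =>
    if A i j ≠ 0 then A i j / (p j - p i)
    else if A j i ≠ 0 then -(A j i / (p i - p j)) else 0 with hW
  have hnotboth : ∀ i j : Fin d, A i j ≠ 0 → A j i ≠ 0 → False := by
    intro i j h1 h2
    exact hirr i (((Relation.TransGen.single h1 : r i j)).trans ((Relation.TransGen.single h2 : r j i)))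
  refine ⟨W, p, ?_, ?_, hmono⟩
  · intro i j
    by_cases h1 : A i j ≠ 0
    · have h2 : ¬ A j i ≠ 0 := fun h2 => hnotboth i j h1 h2
      simp only [hW, if_pos h1, if_neg h2, if_pos h1, neg_neg]
    · by_cases h2 : A j i ≠ 0
      · simp only [hW, if_neg h1, if_pos h2]
      · simp only [hW, if_neg h1, if_neg h2, neg_zero]
  · intro i j
    by_cases h1 : A i j ≠ 0
    · have hlt : p i < p j := hmono i j (Relation.TransGen.single h1 : r i j)
      have hpos : (0:ℝ) < p j - p i := by linarith
      rw [hW]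
      simp only [if_pos h1]
      rw [max_eq_left hpos.le]
      field_simp
    · push_neg at h1
      rw [h1, hW]
      by_cases h2 : A j i ≠ 0
      · have hlt : p j < p i := hmono j i (Relation.TransGen.single h2 : r j i)
        have : max (p j - p i) 0 = 0 := max_eq_right (by linarith)
        rw [this, mul_zero]
      · simp only [if_neg (by simp [h1] : ¬ A i j ≠ 0), if_neg h2, zero_mul]
end

section
/- (Theorem 3.1, equivalent DAG space) A matrix A : Fin d → Fin d → ℝ is the weighted adjacency matrix of a DAG if and only if it lies in the set { (i,j) ↦ W i j * max (p j - p i) 0 : W skew-symmetric, p : Fin d → ℝ }. That is: the edge relation E_A i j ↔ A i j ≠ 0 has no vertex i with Relation.TransGen E_A i i, if and only if there exist a skew-symmetric W and a potential p with A i j = W i j * max (p j - p i) 0 for all i, j. -/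
/-- Theorem 3.1 (equivalent DAG space): `A` is the weighted adjacency matrix of
a DAG iff `A = W ∘ ReLU(grad p)` for some skew-symmetric `W` and potential `p`. -/
theorem dag_iff_hadamard_relu_grad (d : ℕ) (hd : 1 ≤ d)
    (A : Fin d → Fin d → ℝ) :
    (¬ ∃ i : Fin d, Relation.TransGen (fun a b : Fin d => A a b ≠ 0) i i) ↔
    (∃ (W : Fin d → Fin d → ℝ) (p : Fin d → ℝ),
      (∀ i j : Fin d, W i j = -W j i) ∧
      (∀ i j : Fin d, A i j = W i j * max (p j - p i) 0)) := by
  classical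
  set E : Fin d → Fin d → Prop := fun a b => A a b ≠ 0 with hE
  constructor
  · intro h
    -- potential: number of strict predecessors
    set S : Fin d → Finset (Fin d) :=
      fun i => Finset.univ.filter (fun j => Relation.TransGen E j i) with hS
    set p : Fin d → ℝ := fun i => ((S i).card : ℝ) with hp
    have hedge : ∀ i j, E i j → p i < p j := by
      intro i j hij
      have hsub : S i ⊂ S j := by
        constructor
        · intro k hk
          simp only [hS, Finset.mem_filter, Finset.mem_univ, true_and] at hk ⊢
          exact hk.tail hij
        · intro hcon
          have hiSj : i ∈ S j := by
            simp only [hS, Finset.mem_filter, Finset.mem_univ, true_and]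
            exact Relation.TransGen.single hij
          have := hcon hiSj
          simp only [hS, Finset.mem_filter, Finset.mem_univ, true_and] at this
          exact h ⟨i, this⟩
      simp only [hp]
      exact_mod_cast Finset.card_lt_card hsub
    refine ⟨fun i j => if p i < p j then A i j / (p j - p i)
        else if p j < p i then -(A j i / (p i - p j)) else 0, p, ?_, ?_⟩
    · intro i j
      rcases lt_trichotomy (p i) (p j) with hlt | heq | hgt
      · simp [hlt, not_lt.mpr hlt.le, hlt.not_gt]
      · simp [heq, lt_irrefl]
      · simp [hgt, not_lt.mpr hgt.le, hgt.not_gt]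
    · intro i j
      dsimp only
      rcases lt_trichotomy (p i) (p j) with hlt | heq | hgt
      · have hne : p j - p i ≠ 0 := sub_ne_zero.mpr hlt.ne'
        rw [if_pos hlt, max_eq_left (by linarith), div_mul_cancel₀ _ hne]
      · have hA : A i j = 0 := by
          by_contra hA
          exact absurd (hedge i j hA) (by rw [heq]; exact lt_irrefl _)
        simp [heq, hA]
      · have hA : A i j = 0 := by
          by_contra hA
          exact absurd (hedge i j hA) (not_lt.mpr hgt.le)
        rw [if_neg (not_lt.mpr hgt.le), if_pos hgt, hA,
          max_eq_right (by linarith)]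
        ring
  · rintro ⟨W, p, hskew, hAW⟩ ⟨i, hcyc⟩
    have hedge : ∀ a b : Fin d, E a b → p a < p b := by
      intro a b hab
      by_contra hle
      push_neg at hle
      have : max (p b - p a) 0 = 0 := max_eq_right (by linarith)
      exact hab (by rw [hAW a b, this, mul_zero])
    have ht : Transitive (fun a b : Fin d => p a < p b) := fun a b c => lt_trans
    have : Relation.TransGen (fun a b : Fin d => p a < p b) i i :=
      Relation.TransGen.mono hedge _ _ hcyc
    rw [@Relation.transGen_eq_self _ _ ⟨ht⟩] at this
    exact lt_irrefl _ this
end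

section
/- (Theorem 4.3, order preservation) Let A : Fin d → Fin d → ℝ be the weighted adjacency matrix of a DAG, i.e. the edge relation E_A i j ↔ A i j ≠ 0 has no vertex i with Relation.TransGen E_A i i. Let C : Fin d → Fin d → ℝ be the connectivity matrix, C i j = 1 if Relation.TransGen E_A i j and C i j = 0 otherwise, and define the potential p : Fin d → ℝ by p i := (1/(2*d)) * Σ_k (C k i - C i k) (this is the Hodge projection of the skew-symmetric part (1/2)(C - Cᵀ) of the connectivity matrix). Then p preserves the topological order of A quantitatively: whenever Relation.TransGen E_A i j, one has p j - p i ≥ 1/d; in particular p i < p j whenever there is a directed path from i to j. -/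
/-- Theorem 4.3 (order preservation): the Hodge projection of the
skew-symmetric part of the connectivity matrix of a DAG preserves the
topological order quantitatively: `p j - p i ≥ 1/d` whenever there is a
directed path from `i` to `j`; in particular `p i < p j`. -/
theorem connectivity_projection_preserves_order (d : ℕ) (hd : 1 ≤ d)
    (A : Fin d → Fin d → ℝ)
    (hA : ¬ ∃ i : Fin d, Relation.TransGen (fun a b : Fin d => A a b ≠ 0) i i)
    (C : Fin d → Fin d → ℝ)
    (hC₁ : ∀ i j : Fin d,
      Relation.TransGen (fun a b : Fin d => A a b ≠ 0) i j → C i j = 1)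
    (hC₀ : ∀ i j : Fin d,
      ¬ Relation.TransGen (fun a b : Fin d => A a b ≠ 0) i j → C i j = 0)
    (p : Fin d → ℝ)
    (hp : ∀ i : Fin d, p i = (1 / (2 * (d : ℝ))) * ∑ k, (C k i - C i k)) :
    ∀ i j : Fin d, Relation.TransGen (fun a b : Fin d => A a b ≠ 0) i j →
      1 / (d : ℝ) ≤ p j - p i ∧ p i < p j := by
  intro i j hij
  set E := fun a b : Fin d => A a b ≠ 0 with hE
  have hdpos : (0:ℝ) < (d:ℝ) := by exact_mod_cast Nat.lt_of_lt_of_le Nat.zero_lt_one hd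
  have hji : ¬ Relation.TransGen E j i := fun h => hA ⟨i, hij.trans h⟩
  have hne : i ≠ j := by rintro rfl; exact hA ⟨i, hij⟩
  set f := fun k : Fin d => (C k j - C j k) - (C k i - C i k) with hf
  have hfnn : ∀ k : Fin d, 0 ≤ f k := by
    intro k
    have h1 : C k i ≤ C k j := by
      by_cases h : Relation.TransGen E k i
      · rw [hC₁ k i h, hC₁ k j (h.trans hij)]
      · rw [hC₀ k i h]
        by_cases h' : Relation.TransGen E k j
        · rw [hC₁ k j h']; norm_num
        · rw [hC₀ k j h']
    have h2 : C j k ≤ C i k := by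
      by_cases h : Relation.TransGen E j k
      · rw [hC₁ j k h, hC₁ i k (hij.trans h)]
      · rw [hC₀ j k h]
        by_cases h' : Relation.TransGen E i k
        · rw [hC₁ i k h']; norm_num
        · rw [hC₀ i k h']
    simp only [hf]; linarith
  have hfi : f i = 1 := by
    simp only [hf]
    rw [hC₁ i j hij, hC₀ j i hji]; ring
  have hfj : f j = 1 := by
    simp only [hf]
    rw [hC₁ i j hij, hC₀ j i hji]; ring
  have hsum : (2:ℝ) ≤ ∑ k, f k := by
    have hsub : ({i, j} : Finset (Fin d)) ⊆ Finset.univ := Finset.subset_univ _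
    have := Finset.sum_le_sum_of_subset_of_nonneg hsub (fun k _ _ => hfnn k)
    rw [Finset.sum_pair hne, hfi, hfj] at this
    linarith
  have hdiff : p j - p i = (1 / (2 * (d:ℝ))) * ∑ k, f k := by
    rw [hp i, hp j, ← mul_sub, ← Finset.sum_sub_distrib]
  have key : 1 / (d:ℝ) ≤ p j - p i := by
    rw [hdiff]
    have h1 : (0:ℝ) ≤ 1 / (2 * (d:ℝ)) := by positivity
    have h2 : (1 / (2 * (d:ℝ))) * 2 ≤ (1 / (2 * (d:ℝ))) * ∑ k, f k :=
      mul_le_mul_of_nonneg_left hsum h1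
    have h3 : (1:ℝ) / d = (1 / (2 * (d:ℝ))) * 2 := by
      field_simp
    linarith
  refine ⟨key, ?_⟩
  have : (0:ℝ) < 1 / (d:ℝ) := by positivity
  linarith
end
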